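/- arXiv:1307.0083 — 2 statements merged into one kernel-verified Lean document; each statement's English description precedes it below -/
import Mathlib

section
/- Let n ≥ 2 be a positive integer, let p be a prime number, and let a be the exponent of p in the prime factorization of n (i.e. a is the largest integer with p^a dividing n; a = 0 if p does not divide n). If p^(a+1) < log n, then G(n·p) > G(n), where log denotes the natural logarithm. -/
open ArithmeticFunction Real

/-- The Grönwall function `G(n) = σ(n) / (n · log log n)`. -/
noncomputable def G (n : ℕ) : ℝ := (ArithmeticFunction.sigma 1 n : ℝ) / (n * Real.log (Real.log n))

open scoped ArithmeticFunction.sigma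

lemma geom_aux (p : ℕ) : ∀ k, ∑ i ∈ Finset.range (k + 1), p ^ i
    = p * ∑ i ∈ Finset.range k, p ^ i + 1 := fun _ => geom_sum_succ

set_option maxHeartbeats 1000000

theorem gronwall_increase_of_prime_pow_lt_log (n : ℕ) (hn : 2 ≤ n) (p : ℕ) (hp : p.Prime)
    (h : (p : ℝ) ^ (n.factorization p + 1) < Real.log n) :
    G (n * p) > G n := by
  have hn0 : n ≠ 0 := by omega
  set a := n.factorization p with ha
  set m := n / p ^ a with hmdef
  have hproj : p ^ a * m = n := Nat.ordProj_mul_ordCompl_eq_self n p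
  have hcop : Nat.Coprime p m := Nat.coprime_ordCompl hp hn0
  have hm0 : 0 < m := Nat.pos_of_ne_zero (by intro h0; rw [h0, mul_zero] at hproj; omega)
  have hp2 : 2 ≤ p := hp.two_le
  -- sigma facts
  have hS1 : σ 1 (p ^ (a + 1)) = p * σ 1 (p ^ a) + 1 := by
    rw [sigma_one_apply_prime_pow hp, sigma_one_apply_prime_pow hp, geom_aux p (a + 1)]
  have hmul1 : σ 1 n = σ 1 (p ^ a) * σ 1 m := by
    rw [← hproj]
    exact isMultiplicative_sigma.map_mul_of_coprime ((hcop.pow_left a))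
  have hnp : n * p = p ^ (a + 1) * m := by rw [← hproj]; ring
  have hmul2 : σ 1 (n * p) = (p * σ 1 (p ^ a) + 1) * σ 1 m := by
    rw [hnp, isMultiplicative_sigma.map_mul_of_coprime (hcop.pow_left (a + 1)), hS1]
  have hSb : σ 1 (p ^ a) ≤ (a + 1) * p ^ a := by
    rw [sigma_one_apply_prime_pow hp]
    calc ∑ k ∈ Finset.range (a + 1), p ^ k ≤ ∑ _k ∈ Finset.range (a + 1), p ^ a :=
          Finset.sum_le_sum fun k hk => Nat.pow_le_pow_right (by omega)
            (by simpa using Nat.lt_succ_iff.mp (Finset.mem_range.mp hk))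
      _ = (a + 1) * p ^ a := by simp [Finset.sum_const, mul_comm]
  have hS0 : 1 ≤ σ 1 (p ^ a) := by
    rw [sigma_one_apply_prime_pow hp]
    calc 1 = ∑ k ∈ Finset.range 1, p ^ k := by simp
      _ ≤ _ := Finset.sum_le_sum_of_subset (by simp)
  have hT0 : 1 ≤ σ 1 m := by
    rw [sigma_one_apply]
    calc 1 ≤ m := hm0
      _ ≤ ∑ d ∈ Nat.divisors m, d :=
          Finset.single_le_sum (f := fun d => d) (fun i _ => Nat.zero_le i)
            (Nat.mem_divisors_self m (by omega))
  -- real setup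
  have hsR : (1 : ℝ) ≤ (σ 1 (p ^ a) : ℝ) := by exact_mod_cast hS0
  have htR : (1 : ℝ) ≤ (σ 1 m : ℝ) := by exact_mod_cast hT0
  set s : ℝ := (σ 1 (p ^ a) : ℝ) with hs
  set t : ℝ := (σ 1 m : ℝ) with ht
  have hpR : (2 : ℝ) ≤ (p : ℝ) := by exact_mod_cast hp2
  have hpow2 : (2 : ℝ) ≤ (p : ℝ) ^ (a + 1) := by
    calc (2 : ℝ) ≤ (p : ℝ) := hpR
      _ = (p : ℝ) ^ 1 := (pow_one _).symm
      _ ≤ (p : ℝ) ^ (a + 1) := pow_le_pow_right₀ (by linarith) (by omega)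
  have hlogn : (2 : ℝ) < Real.log n := lt_of_le_of_lt hpow2 h
  have hlogn0 : (0 : ℝ) < Real.log n := by linarith
  have hnR : (2 : ℝ) ≤ (n : ℝ) := by exact_mod_cast hn
  have hlognp : Real.log (n * p : ℕ) = Real.log n + Real.log p := by
    push_cast
    rw [Real.log_mul (by linarith) (by linarith)]
  have hlogp_pos : (0 : ℝ) < Real.log p := Real.log_pos (by linarith)
  have hlognp_pos : (0 : ℝ) < Real.log (n * p : ℕ) := by rw [hlognp]; linarith
  set L : ℝ := Real.log (Real.log n) with hL
  set L' : ℝ := Real.log (Real.log (n * p : ℕ)) with hL'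
  have hLlb : ((a : ℝ) + 1) * Real.log p < L := by
    have := Real.log_lt_log (show (0:ℝ) < (p:ℝ) ^ (a+1) by linarith) h
    rwa [Real.log_pow, Nat.cast_add, Nat.cast_one] at this
  have hL0 : (0 : ℝ) < L := by nlinarith
  have hLL' : L < L' := by
    rw [hL, hL']
    apply Real.log_lt_log hlogn0
    rw [hlognp]; linarith
  have hkey : (L' - L) * Real.log n ≤ Real.log p := by
    have h1 : L' - L = Real.log (Real.log (n * p : ℕ) / Real.log n) := by
      rw [hL, hL', Real.log_div (by linarith) (by linarith)]
    have h2 : Real.log (Real.log (n * p : ℕ) / Real.log n) ≤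
        Real.log (n * p : ℕ) / Real.log n - 1 :=
      Real.log_le_sub_one_of_pos (div_pos hlognp_pos hlogn0)
    have h3 : (L' - L) ≤ Real.log (n * p : ℕ) / Real.log n - 1 := by rw [h1]; exact h2
    have h4 : (Real.log (n * p : ℕ) / Real.log n - 1) * Real.log n = Real.log p := by
      rw [sub_mul, div_mul_cancel₀ _ (ne_of_gt hlogn0), one_mul, hlognp]; ring
    calc (L' - L) * Real.log n ≤ (Real.log (n * p : ℕ) / Real.log n - 1) * Real.log n :=
          mul_le_mul_of_nonneg_right h3 (le_of_lt hlogn0)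
      _ = Real.log p := h4
  -- bound p * s
  have hpsb : (p : ℝ) * s ≤ ((a : ℝ) + 1) * (p : ℝ) ^ (a + 1) := by
    have hnat : p * σ 1 (p ^ a) ≤ (a + 1) * p ^ (a + 1) := by
      calc p * σ 1 (p ^ a) ≤ p * ((a + 1) * p ^ a) := Nat.mul_le_mul (le_refl p) hSb
        _ = (a + 1) * p ^ (a + 1) := by ring
    rw [hs]
    push_cast
    exact_mod_cast hnat
  -- main inequality: p * s * (L' - L) < L
  have hmain : (p : ℝ) * s * (L' - L) < L := by
    rcases le_or_gt (L' - L) 0 with hd | hd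
    · nlinarith
    · have h5 : (L' - L) * (p : ℝ) ^ (a + 1) < Real.log p := by nlinarith
      have h6 : (p : ℝ) * s * (L' - L) ≤ ((a : ℝ) + 1) * ((L' - L) * (p : ℝ) ^ (a + 1)) := by
        nlinarith
      have h7 : ((a : ℝ) + 1) * ((L' - L) * (p : ℝ) ^ (a + 1)) < ((a : ℝ) + 1) * Real.log p := by
        have ha0 : (0 : ℝ) < (a : ℝ) + 1 := by positivity
        nlinarith
      linarith
  -- conclude
  have hnpos : (0 : ℝ) < (n : ℝ) := by linarith
  have htpos : (0 : ℝ) < t := by linarith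
  have hd1 : (0 : ℝ) < (n : ℝ) * L := mul_pos hnpos hL0
  have hd2 : (0 : ℝ) < ((n * p : ℕ) : ℝ) * L' := by
    have : (0 : ℝ) < ((n * p : ℕ) : ℝ) := by push_cast; nlinarith
    exact mul_pos this (by linarith)
  unfold G
  rw [gt_iff_lt, ← hL, ← hL', div_lt_div_iff₀ hd1 hd2, hmul1, hmul2]
  have hcast : ((n * p : ℕ) : ℝ) = (n : ℝ) * (p : ℝ) := by push_cast; ring
  rw [hcast]
  push_cast
  rw [← hs, ← ht]
  have key : (0 : ℝ) < t * (n : ℝ) * (L - (p : ℝ) * s * (L' - L)) :=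
    mul_pos (mul_pos htpos hnpos) (by linarith)
  nlinarith [key]
end

section
/- Let n ≥ 3 be a positive integer, let p be a prime number, and let a be the exponent of p in the prime factorization of n (a = 0 if p does not divide n). Then G(n·p) > G(n) holds if and only if (log n)^(1/S) > 1 + (log p)/(log n), where S = Σ_{α=1}^{a+1} p^α and log denotes the natural logarithm. -/
open ArithmeticFunction Real

open scoped ArithmeticFunction.sigma

theorem gronwall_increase_iff_rpow_inv_sum (n : ℕ) (hn : 3 ≤ n) (p : ℕ) (hp : p.Prime)
    (S : ℕ) (hS : S = ∑ α ∈ Finset.Icc 1 (n.factorization p + 1), p ^ α) :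
    G (n * p) > G n ↔ (Real.log n) ^ ((S : ℝ)⁻¹) > 1 + Real.log p / Real.log n := by
  have hn0 : 0 < n := by omega
  set a := n.factorization p with ha
  have hSr : S = ∑ i ∈ Finset.range (a + 1), p ^ (1 + i) := by
    rw [hS, ← Finset.Ico_add_one_right_eq_Icc, Finset.sum_Ico_eq_sum_range]; norm_num
  have hS1 : S = p * ∑ i ∈ Finset.range (a + 1), p ^ i := by
    rw [hSr, Finset.mul_sum]
    exact Finset.sum_congr rfl fun i _ => by ring
  have hS2 : (σ 1 (p ^ (a + 1)) : ℕ) = S + 1 := by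
    rw [sigma_one_apply_prime_pow hp, Finset.sum_range_succ', hSr]
    simp [add_comm]
  have hm : p ^ a * (n / p ^ a) = n := Nat.ordProj_mul_ordCompl_eq_self n p
  have hcop : Nat.Coprime p (n / p ^ a) := Nat.coprime_ordCompl hp hn0.ne'
  have hσa : (σ 1 n : ℕ) = σ 1 (p ^ a) * σ 1 (n / p ^ a) := by
    conv_lhs => rw [← hm]
    exact isMultiplicative_sigma.map_mul_of_coprime (Nat.Coprime.pow_left a hcop)
  have hσb : (σ 1 (n * p) : ℕ) = σ 1 (p ^ (a + 1)) * σ 1 (n / p ^ a) := by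
    have h2 : p ^ (a + 1) * (n / p ^ a) = n * p := by
      rw [pow_succ, mul_comm (p ^ a) p, mul_assoc, hm, mul_comm]
    rw [← h2]
    exact isMultiplicative_sigma.map_mul_of_coprime (Nat.Coprime.pow_left (a + 1) hcop)
  have hσp : (σ 1 (p ^ a) : ℕ) * p = S := by
    rw [sigma_one_apply_prime_pow hp, hS1]; ring
  have key : (σ 1 (n * p) : ℕ) * S = σ 1 n * (p * (S + 1)) := by
    rw [hσa, hσb, hS2, ← hσp]; ring
  have hp2 : 2 ≤ p := hp.two_le
  have hσnpos : 0 < (σ 1 n : ℕ) := by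
    rw [sigma_one_apply]
    exact Finset.sum_pos (fun d hd => Nat.pos_of_mem_divisors hd)
      ⟨n, Nat.mem_divisors_self n hn0.ne'⟩
  have hSpos : 0 < S := by
    rw [hS1]
    have : 0 < ∑ i ∈ Finset.range (a + 1), p ^ i :=
      Finset.sum_pos (fun i _ => pow_pos (by omega) i) (by simp)
    exact Nat.mul_pos (by omega) this
  -- real facts
  have hnR : (3 : ℝ) ≤ (n : ℝ) := by exact_mod_cast hn
  have hL1 : 1 < Real.log n := by
    rw [show (1 : ℝ) = Real.log (Real.exp 1) by simp]
    exact Real.log_lt_log (Real.exp_pos 1) (lt_of_lt_of_le (by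
      have := Real.exp_one_lt_d9; linarith) hnR)
  have hLppos : 0 < Real.log p := Real.log_pos (by exact_mod_cast hp.one_lt)
  have hc : 0 < Real.log (Real.log n) := Real.log_pos hL1
  have hlognp : Real.log ((n : ℝ) * p) = Real.log n + Real.log p :=
    Real.log_mul (by positivity) (by positivity)
  have hd1 : 1 < Real.log ((n : ℝ) * p) := by rw [hlognp]; linarith
  have hd : 0 < Real.log (Real.log ((n : ℝ) * p)) := Real.log_pos hd1
  set c := Real.log (Real.log n) with hcdef
  set d := Real.log (Real.log ((n : ℝ) * p)) with hddef
  have keyR : (σ 1 (n * p) : ℝ) * S = (σ 1 n : ℝ) * (p * (S + 1)) := by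
    exact_mod_cast congrArg (Nat.cast : ℕ → ℝ) key
  have hA : 0 < (σ 1 n : ℝ) := by exact_mod_cast hσnpos
  have hSR : 0 < (S : ℝ) := by exact_mod_cast hSpos
  have hpR : 0 < (p : ℝ) := by positivity
  have hnRpos : 0 < (n : ℝ) := by positivity
  -- step 1 : G inequality ↔ S d < (S+1) c
  have step1 : G (n * p) > G n ↔ (S : ℝ) * d < ((S : ℝ) + 1) * c := by
    unfold G
    push_cast
    rw [← hcdef, ← hddef, gt_iff_lt, div_lt_div_iff₀ (by positivity) (by positivity),
      ← mul_lt_mul_iff_left₀ hSR]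
    have e1 : (σ 1 (n * p) : ℝ) * ((n : ℝ) * c) * S
        = ((σ 1 n : ℝ) * n * p) * (((S : ℝ) + 1) * c) := by
      calc (σ 1 (n * p) : ℝ) * ((n : ℝ) * c) * S
          = ((σ 1 (n * p) : ℝ) * S) * ((n : ℝ) * c) := by ring
        _ = ((σ 1 n : ℝ) * ((p : ℝ) * ((S : ℝ) + 1))) * ((n : ℝ) * c) := by rw [keyR]
        _ = _ := by ring
    have e2 : (σ 1 n : ℝ) * ((n : ℝ) * (p : ℝ) * d) * S
        = ((σ 1 n : ℝ) * n * p) * ((S : ℝ) * d) := by ring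
    rw [e1, e2, mul_lt_mul_iff_right₀ (by positivity)]
  -- step 2 : log difference
  have hdc : d - c = Real.log (1 + Real.log p / Real.log n) := by
    rw [hddef, hcdef, hlognp, ← Real.log_div (by positivity) (by positivity)]
    congr 1
    field_simp
  have hxpos : 0 < 1 + Real.log p / Real.log n := by positivity
  -- step 3 : rpow condition
  have step3 : (Real.log n) ^ ((S : ℝ)⁻¹) > 1 + Real.log p / Real.log n ↔
      Real.log (1 + Real.log p / Real.log n) < (S : ℝ)⁻¹ * c := by
    rw [Real.rpow_def_of_pos (by linarith : (0 : ℝ) < Real.log n), gt_iff_lt,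
      ← Real.log_lt_iff_lt_exp hxpos, hcdef, mul_comm]
  rw [step1, step3, ← hdc]
  have e3 : (d - c < (S : ℝ)⁻¹ * c) ↔ (d - c) * S < c := by
    rw [inv_mul_eq_div, ← lt_div_iff₀ hSR]
  rw [e3]
  constructor <;> intro h <;> nlinarith
end
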